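/- Let κ > 0 and let V : X → ℝ satisfy V ≡ 0 on X∖R and Σ_{y∈X} p(x,y)·(V(y) − V(x)) = κ·(V(x) − 1) for every x ∈ R (V is the equilibrium potential V(x) = P_x(σ_κ < τ_{X∖R}), with σ_κ an exponential time of rate κ independent of the chain). Then Σ_{x∈R} μ_R(x)·V(x) = 1 − C_κ(R, X∖R)/(κ·μ(R)). -/

import Mathlib

open Finset

noncomputable section

/-- Irreducibility of a finite nonnegative matrix: any state reaches any other. -/
def Irred {n : Type*} [Fintype n] [DecidableEq n] (P : Matrix n n ℝ) : Prop :=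
  ∀ x y, ∃ k : ℕ, 0 < (P ^ k) x y

/-- The restricted ensemble `μ_R(x) = μ(x)/μ(R)` (as a function on all of `X`). -/
def muR {X : Type*} [Fintype X] (μ : X → ℝ) (R : Finset X) (x : X) : ℝ :=
  μ x / ∑ y ∈ R, μ y

/-- Escape probability `e_R(x) = Σ_{y∉R} p(x,y)`. -/
def escR {X : Type*} [Fintype X] [DecidableEq X] (p : Matrix X X ℝ) (R : Finset X)
    (x : X) : ℝ := ∑ y ∈ Rᶜ, p x y

/-- The reflected kernel `p_R` on `R`. -/
def pRefl {X : Type*} [Fintype X] [DecidableEq X] (p : Matrix X X ℝ) (R : Finset X) :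
    Matrix R R ℝ :=
  fun x y => if (x : X) = (y : X) then p x x + escR p R x else p x y

/-- The sub-Markovian killed kernel `p_R^*` on `R`. -/
def pKill {X : Type*} [Fintype X] (p : Matrix X X ℝ) (R : Finset X) : Matrix R R ℝ :=
  fun x y => p x y

/-- Mean of `f` with respect to the weight `μ` on a finite type. -/
def meanOf {n : Type*} [Fintype n] (μ : n → ℝ) (f : n → ℝ) : ℝ := ∑ x, μ x * f x

/-- Scalar product `⟨f,g⟩` with respect to the weight `μ` on a finite type. -/
def innOf {n : Type*} [Fintype n] (μ : n → ℝ) (f g : n → ℝ) : ℝ := ∑ x, μ x * f x * g x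

/-- Variance of `f` with respect to the weight `μ` on a finite type. -/
def varOf {n : Type*} [Fintype n] (μ : n → ℝ) (f : n → ℝ) : ℝ :=
  ∑ x, μ x * (f x - meanOf μ f) ^ 2

/-- Dirichlet form of the kernel `P` reversible w.r.t. `μ`. -/
def dirOf {n : Type*} [Fintype n] (P : Matrix n n ℝ) (μ : n → ℝ) (f : n → ℝ) : ℝ :=
  (1 / 2) * ∑ x, ∑ y, μ x * P x y * (f x - f y) ^ 2

/-- Spectral gap of the kernel `P` reversible w.r.t. `μ`:
`min { D(f)/Var_μ(f) : Var_μ(f) ≠ 0 }`. -/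
def gapOf {n : Type*} [Fintype n] (P : Matrix n n ℝ) (μ : n → ℝ) : ℝ :=
  sInf {r : ℝ | ∃ f : n → ℝ, varOf μ f ≠ 0 ∧ r = dirOf P μ f / varOf μ f}

/-- `(κ,∞)`-capacity `C_κ(R, X∖R)` (Dirichlet principle). -/
def capK {X : Type*} [Fintype X] [DecidableEq X] (p : Matrix X X ℝ) (μ : X → ℝ)
    (R : Finset X) (κ : ℝ) : ℝ :=
  sInf {r : ℝ | ∃ f : X → ℝ, (∀ x ∉ R, f x = 0) ∧
    r = dirOf p μ f + κ * ∑ a ∈ R, μ a * (f a - 1) ^ 2}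

/-- `(∞,λ)`-capacity `C^λ(R, X∖R)` (Dirichlet principle). -/
def capL {X : Type*} [Fintype X] [DecidableEq X] (p : Matrix X X ℝ) (μ : X → ℝ)
    (R : Finset X) (l : ℝ) : ℝ :=
  sInf {r : ℝ | ∃ f : X → ℝ, (∀ x ∈ R, f x = 1) ∧
    r = dirOf p μ f + l * ∑ b ∈ Rᶜ, μ b * f b ^ 2}

/-- `(κ,λ)`-capacity `C_κ^λ(A, B)` (Dirichlet principle). -/
def capKL {X : Type*} [Fintype X] [DecidableEq X] (p : Matrix X X ℝ) (μ : X → ℝ)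
    (A B : Finset X) (κ l : ℝ) : ℝ :=
  sInf {r : ℝ | ∃ f : X → ℝ,
    r = dirOf p μ f + κ * ∑ a ∈ A, μ a * (f a - 1) ^ 2 + l * ∑ b ∈ B, μ b * f b ^ 2}

/-- Lemma 5.1: the mean of the equilibrium potential `V_κ` under the restricted ensemble is
`1 − C_κ(R, X∖R)/(κ·μ(R))`. -/
theorem mean_equilibrium_potential
    (X : Type*) [Fintype X] [DecidableEq X]
    (p : Matrix X X ℝ) (μ : X → ℝ) (R : Finset X)
    (hp_nonneg : ∀ x y, 0 ≤ p x y)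
    (hp_row : ∀ x, ∑ y, p x y = 1)
    (hp_irr : Irred p)
    (hμ_pos : ∀ x, 0 < μ x)
    (hμ_sum : ∑ x, μ x = 1)
    (hrev : ∀ x y, μ x * p x y = μ y * p y x)
    (hR_ne : R.Nonempty) (hR_proper : R ≠ Finset.univ)
    (κ : ℝ) (hκ : 0 < κ)
    (V : X → ℝ) (hV0 : ∀ x ∉ R, V x = 0)
    (hVharm : ∀ x ∈ R, ∑ y, p x y * (V y - V x) = κ * (V x - 1)) :
    ∑ x : R, muR μ R x * V x = 1 - capK p μ R κ / (κ * ∑ y ∈ R, μ y) := by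
  classical
  set M : ℝ := ∑ y ∈ R, μ y with hM
  have hMpos : 0 < M := Finset.sum_pos (fun x _ => hμ_pos x) hR_ne
  -- key cross-term identity
  have key : ∀ g : X → ℝ, (∀ x ∉ R, g x = 0) →
      ∑ x, ∑ y, μ x * p x y * (V x - V y) * (g x - g y)
        = -2 * κ * ∑ a ∈ R, μ a * g a * (V a - 1) := by
    intro g hg
    have hsym : ∑ x, ∑ y, μ x * p x y * (V x - V y) * g y
        = ∑ x, ∑ y, μ x * p x y * (V y - V x) * g x := by
      rw [Finset.sum_comm]
      refine Finset.sum_congr rfl fun y _ => Finset.sum_congr rfl fun x _ => ?_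
      rw [show μ x * p x y = μ y * p y x from hrev x y]
    have hsplit : ∑ x, ∑ y, μ x * p x y * (V x - V y) * (g x - g y)
        = 2 * ∑ x, ∑ y, μ x * p x y * (V x - V y) * g x := by
      have h1 : ∀ x y : X, μ x * p x y * (V x - V y) * (g x - g y)
          = μ x * p x y * (V x - V y) * g x - μ x * p x y * (V x - V y) * g y := by
        intro x y; ring
      simp only [h1, Finset.sum_sub_distrib, hsym]
      have h2 : ∀ x y : X, μ x * p x y * (V y - V x) * g x
          = -(μ x * p x y * (V x - V y) * g x) := by intro x y; ring
      simp only [h2, Finset.sum_neg_distrib]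
      ring
    have hT : ∑ x, ∑ y, μ x * p x y * (V x - V y) * g x
        = -(κ * ∑ a ∈ R, μ a * g a * (V a - 1)) := by
      have hterm : ∀ x : X, ∑ y, μ x * p x y * (V x - V y) * g x
          = -(μ x * g x * ∑ y, p x y * (V y - V x)) := by
        intro x
        rw [Finset.mul_sum, ← Finset.sum_neg_distrib]
        exact Finset.sum_congr rfl fun y _ => by ring
      calc ∑ x, ∑ y, μ x * p x y * (V x - V y) * g x
          = ∑ x, -(μ x * g x * ∑ y, p x y * (V y - V x)) :=
            Finset.sum_congr rfl fun x _ => hterm x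
        _ = ∑ x ∈ R, -(μ x * g x * ∑ y, p x y * (V y - V x)) :=
            (Finset.sum_subset (Finset.subset_univ R)
              (fun x _ hx => by simp [hg x hx])).symm
        _ = ∑ x ∈ R, -(μ x * g x * (κ * (V x - 1))) :=
            Finset.sum_congr rfl fun x hx => by rw [hVharm x hx]
        _ = -(κ * ∑ a ∈ R, μ a * g a * (V a - 1)) := by
            rw [Finset.mul_sum, ← Finset.sum_neg_distrib]
            exact Finset.sum_congr rfl fun a _ => by ring
    rw [hsplit, hT]; ring
  -- decomposition of the energy functional around V
  have decomp : ∀ f : X → ℝ, (∀ x ∉ R, f x = 0) →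
      dirOf p μ f + κ * ∑ a ∈ R, μ a * (f a - 1) ^ 2
        = (dirOf p μ V + κ * ∑ a ∈ R, μ a * (V a - 1) ^ 2)
          + (dirOf p μ (fun x => f x - V x) + κ * ∑ a ∈ R, μ a * (f a - V a) ^ 2) := by
    intro f hf
    have hg : ∀ x ∉ R, f x - V x = 0 := fun x hx => by rw [hf x hx, hV0 x hx, sub_zero]
    have hk := key (fun x => f x - V x) hg
    try simp only at hk
    unfold dirOf
    have hpt : ∀ x y : X, μ x * p x y * (f x - f y) ^ 2
        = μ x * p x y * (V x - V y) ^ 2 + μ x * p x y * ((f x - V x) - (f y - V y)) ^ 2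
          + 2 * (μ x * p x y * (V x - V y) * ((f x - V x) - (f y - V y))) := by
      intro x y; ring
    have hS : ∀ a : X, μ a * (f a - 1) ^ 2
        = μ a * (V a - 1) ^ 2 + μ a * (f a - V a) ^ 2
          + 2 * (μ a * (f a - V a) * (V a - 1)) := by
      intro a; ring
    simp only [hpt, hS, Finset.sum_add_distrib]
    rw [show (∑ x, ∑ y, 2 * (μ x * p x y * (V x - V y) * ((f x - V x) - (f y - V y))))
        = 2 * ∑ x, ∑ y, μ x * p x y * (V x - V y) * ((f x - V x) - (f y - V y)) by
          rw [Finset.mul_sum]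
          exact Finset.sum_congr rfl fun x _ => by rw [Finset.mul_sum]]
    rw [hk]
    rw [show (∑ a ∈ R, 2 * (μ a * (f a - V a) * (V a - 1)))
        = 2 * ∑ a ∈ R, μ a * (f a - V a) * (V a - 1) from (Finset.mul_sum _ _ _).symm]
    ring
  -- value of the functional at V
  have hEV : dirOf p μ V + κ * ∑ a ∈ R, μ a * (V a - 1) ^ 2
      = κ * ∑ a ∈ R, μ a * (1 - V a) := by
    have hDV : dirOf p μ V = -(κ * ∑ a ∈ R, μ a * V a * (V a - 1)) := by
      unfold dirOf
      have h2 : ∀ x y : X, μ x * p x y * (V x - V y) ^ 2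
          = μ x * p x y * (V x - V y) * (V x - V y) := by intro x y; ring
      simp only [h2]
      rw [key V hV0]; ring
    rw [hDV]
    have h3 : ∑ a ∈ R, μ a * (V a - 1) ^ 2
        = ∑ a ∈ R, μ a * V a * (V a - 1) + ∑ a ∈ R, μ a * (1 - V a) := by
      rw [← Finset.sum_add_distrib]
      exact Finset.sum_congr rfl fun a _ => by ring
    rw [h3]; ring
  -- compute the capacity
  have hlb : ∀ r ∈ {r : ℝ | ∃ f : X → ℝ, (∀ x ∉ R, f x = 0) ∧
      r = dirOf p μ f + κ * ∑ a ∈ R, μ a * (f a - 1) ^ 2},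
      dirOf p μ V + κ * ∑ a ∈ R, μ a * (V a - 1) ^ 2 ≤ r := by
    rintro r ⟨f, hf, rfl⟩
    rw [decomp f hf]
    have h1 : 0 ≤ dirOf p μ (fun x => f x - V x) := by
      unfold dirOf
      refine mul_nonneg (by norm_num) (Finset.sum_nonneg fun x _ =>
        Finset.sum_nonneg fun y _ =>
          mul_nonneg (mul_nonneg (hμ_pos x).le (hp_nonneg x y)) (sq_nonneg _))
    have h2 : 0 ≤ κ * ∑ a ∈ R, μ a * (f a - V a) ^ 2 :=
      mul_nonneg hκ.le (Finset.sum_nonneg fun a _ =>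
        mul_nonneg (hμ_pos a).le (sq_nonneg _))
    linarith
  have hmem : dirOf p μ V + κ * ∑ a ∈ R, μ a * (V a - 1) ^ 2 ∈
      {r : ℝ | ∃ f : X → ℝ, (∀ x ∉ R, f x = 0) ∧
        r = dirOf p μ f + κ * ∑ a ∈ R, μ a * (f a - 1) ^ 2} := ⟨V, hV0, rfl⟩
  have hcap : capK p μ R κ = κ * ∑ a ∈ R, μ a * (1 - V a) := by
    rw [← hEV]
    exact le_antisymm (csInf_le ⟨_, hlb⟩ hmem) (le_csInf ⟨_, hmem⟩ hlb)
  -- final computation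
  have hW : ∑ x : R, muR μ R x * V x = (∑ a ∈ R, μ a * V a) / M := by
    rw [Finset.sum_coe_sort R (fun x => muR μ R x * V x), Finset.sum_div]
    refine Finset.sum_congr rfl fun a _ => ?_
    rw [muR, ← hM]; ring
  have hsum : ∑ a ∈ R, μ a * (1 - V a) = M - ∑ a ∈ R, μ a * V a := by
    rw [hM, ← Finset.sum_sub_distrib]
    exact Finset.sum_congr rfl fun a _ => by ring
  rw [hcap, hW, hsum]
  field_simp
  ring
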